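/- The map Θ : B(0,√2) ⊂ ℝ² → open unit disk, given in polar coordinates by (r, φ) ↦ (r√(1 − r²/4), φ), i.e. Θ(x) = √(1 − |x|²/4)·x, pushes forward the Lebesgue measure on B(0,√2) to the measure with density 1/√(1 − |y|²) on the unit disk (the Riemannian area measure of S² in projection coordinates). -/

import Mathlib

open Real Set MeasureTheory ENNReal

noncomputable def distD (x : EuclideanSpace ℝ (Fin 2)) :
    EuclideanSpace ℝ (Fin 2) →L[ℝ] EuclideanSpace ℝ (Fin 2) :=
  Real.sqrt (1 - ‖x‖^2/4) • ContinuousLinearMap.id ℝ _ +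
    ((-(1 / (4 * Real.sqrt (1 - ‖x‖^2/4)))) • (innerSL ℝ x)).smulRight x

lemma norm_sq_eq' (x : EuclideanSpace ℝ (Fin 2)) : ‖x‖^2 = x 0^2 + x 1^2 := by
  rw [EuclideanSpace.norm_eq, Real.sq_sqrt (by positivity)]
  simp [Fin.sum_univ_two, sq]

lemma distD_hasFDerivAt (x : EuclideanSpace ℝ (Fin 2)) (hx : ‖x‖^2 < 4) :
    HasFDerivAt (fun y : EuclideanSpace ℝ (Fin 2) => Real.sqrt (1 - ‖y‖^2/4) • y)
      (distD x) x := by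
  have h0' : (0:ℝ) < 1 - ‖x‖^2/4 := by nlinarith [sq_nonneg ‖x‖]
  have h0 : (1 : ℝ) - ‖x‖^2/4 ≠ 0 := ne_of_gt h0'
  have hg : (0:ℝ) < Real.sqrt (1 - ‖x‖^2/4) := Real.sqrt_pos.2 h0'
  have hq : HasFDerivAt (fun y : EuclideanSpace ℝ (Fin 2) => (1 : ℝ) - ‖y‖^2/4)
      (-((1/4 : ℝ) • (2 • (innerSL ℝ x)))) x := by
    have := ((hasStrictFDerivAt_norm_sq x).hasFDerivAt.const_mul (1/4 : ℝ)).const_sub 1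
    refine this.congr_of_eventuallyEq (Filter.Eventually.of_forall fun y => ?_)
    show (1:ℝ) - ‖y‖^2/4 = 1 - 1/4 * ‖y‖^2
    ring
  have hs := (hq.sqrt h0).smul (hasFDerivAt_id x)
  refine hs.congr_fderiv ?_
  unfold distD
  ext v i
  simp only [ContinuousLinearMap.add_apply, ContinuousLinearMap.smul_apply,
    ContinuousLinearMap.id_apply, ContinuousLinearMap.smulRight_apply,
    ContinuousLinearMap.neg_apply, ContinuousLinearMap.coe_smul', Pi.smul_apply,
    PiLp.add_apply, PiLp.smul_apply, smul_eq_mul, id_eq]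
  field_simp
  ring

lemma distD_det (x : EuclideanSpace ℝ (Fin 2)) (hx : ‖x‖^2 < 4) :
    (distD x).det = 1 - ‖x‖^2/2 := by
  have h0' : (0:ℝ) < 1 - ‖x‖^2/4 := by nlinarith [sq_nonneg ‖x‖]
  have hg : (0:ℝ) < Real.sqrt (1 - ‖x‖^2/4) := Real.sqrt_pos.2 h0'
  set g : ℝ := Real.sqrt (1 - ‖x‖^2/4) with hgdef
  set c : ℝ := -(1 / (4 * g)) with hcdef
  have hM : (distD x : EuclideanSpace ℝ (Fin 2) →ₗ[ℝ] EuclideanSpace ℝ (Fin 2))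
      = Matrix.toEuclideanLin !![g + c * (x 0 * x 0), c * (x 0 * x 1);
                                 c * (x 1 * x 0), g + c * (x 1 * x 1)] := by
    apply LinearMap.ext
    intro v
    ext i
    simp only [ContinuousLinearMap.coe_coe]
    rw [Matrix.toEuclideanLin_apply]
    unfold distD
    simp only [ContinuousLinearMap.add_apply, ContinuousLinearMap.smul_apply,
      ContinuousLinearMap.id_apply, ContinuousLinearMap.smulRight_apply,
      ContinuousLinearMap.neg_apply, ContinuousLinearMap.coe_smul', Pi.smul_apply,
      PiLp.add_apply, PiLp.smul_apply, smul_eq_mul, innerSL_apply_apply, PiLp.inner_apply,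
      RCLike.inner_apply, conj_trivial, Fin.sum_univ_two]
    rw [PiLp.toLp_apply]
    fin_cases i <;>
      simp [Matrix.mulVec, dotProduct, Fin.sum_univ_two, PiLp.toLp_apply] <;> ring
  have hdet : (distD x).det = LinearMap.det
      (Matrix.toEuclideanLin !![g + c * (x 0 * x 0), c * (x 0 * x 1);
                                 c * (x 1 * x 0), g + c * (x 1 * x 1)]) := by
    rw [ContinuousLinearMap.det, hM]
  rw [hdet, Matrix.toEuclideanLin_eq_toLin, LinearMap.det_toLin, Matrix.det_fin_two_of]
  have hg2 : g^2 = 1 - ‖x‖^2/4 := Real.sq_sqrt (le_of_lt h0')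
  have hcg : c * g = -(1/4) := by
    rw [hcdef]; field_simp
  have hn := norm_sq_eq' x
  linear_combination hg2 + (x 0 ^ 2 + x 1 ^ 2) * hcg + (1/4) * hn

lemma theta_norm_sq (x : EuclideanSpace ℝ (Fin 2)) (hx : ‖x‖^2 ≤ 4) :
    ‖Real.sqrt (1 - ‖x‖^2/4) • x‖^2 = ‖x‖^2 * (1 - ‖x‖^2/4) := by
  rw [norm_smul, Real.norm_eq_abs, abs_of_nonneg (Real.sqrt_nonneg _), mul_pow,
    Real.sq_sqrt (by linarith)]
  ring

lemma memball_sq (x : EuclideanSpace ℝ (Fin 2))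
    (hx : x ∈ Metric.ball (0 : EuclideanSpace ℝ (Fin 2)) (Real.sqrt 2)) :
    ‖x‖^2 < 2 := by
  rw [Metric.mem_ball, dist_zero_right] at hx
  calc ‖x‖^2 < (Real.sqrt 2)^2 := by
        apply sq_lt_sq' _ hx
        linarith [norm_nonneg x, Real.sqrt_nonneg 2]
    _ = 2 := Real.sq_sqrt (by norm_num)

lemma theta_injOn :
    Set.InjOn (fun x : EuclideanSpace ℝ (Fin 2) => Real.sqrt (1 - ‖x‖^2/4) • x)
      (Metric.ball 0 (Real.sqrt 2)) := by
  intro x hx y hy hxy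
  have hx2 := memball_sq x hx
  have hy2 := memball_sq y hy
  have hnorm : ‖x‖^2 * (1 - ‖x‖^2/4) = ‖y‖^2 * (1 - ‖y‖^2/4) := by
    rw [← theta_norm_sq x (by linarith), ← theta_norm_sq y (by linarith)]
    simp only at hxy
    rw [hxy]
  have hst : ‖x‖^2 = ‖y‖^2 := by
    have h4 : (‖x‖^2 - ‖y‖^2) * (4 - (‖x‖^2 + ‖y‖^2)) = 0 := by linear_combination 4 * hnorm
    rcases mul_eq_zero.1 h4 with h | h
    · linarith
    · linarith
  have hgpos : (0:ℝ) < Real.sqrt (1 - ‖x‖^2/4) := Real.sqrt_pos.2 (by linarith)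
  simp only at hxy
  rw [hst] at hxy hgpos
  exact smul_right_injective _ (ne_of_gt hgpos) hxy

lemma theta_image :
    (fun x : EuclideanSpace ℝ (Fin 2) => Real.sqrt (1 - ‖x‖^2/4) • x) ''
      (Metric.ball 0 (Real.sqrt 2)) = Metric.ball 0 1 := by
  apply Set.Subset.antisymm
  · rintro _ ⟨x, hx, rfl⟩
    have hx2 := memball_sq x hx
    rw [Metric.mem_ball, dist_zero_right]
    have h1 : ‖Real.sqrt (1 - ‖x‖^2/4) • x‖^2 < 1 := by
      rw [theta_norm_sq x (by linarith)]
      nlinarith [sq_nonneg (1 - ‖x‖^2/2), sq_nonneg ‖x‖]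
    nlinarith [norm_nonneg (Real.sqrt (1 - ‖x‖^2/4) • x)]
  · intro y hy
    rw [Metric.mem_ball, dist_zero_right] at hy
    by_cases h0 : y = 0
    · exact ⟨0, by simp [Real.sqrt_pos, Metric.mem_ball], by simp [h0]⟩
    · set φ : ℝ → ℝ := fun t => t * Real.sqrt (1 - t^2/4) with hφ
      have hcont : ContinuousOn φ (Icc 0 (Real.sqrt 2)) := by
        apply Continuous.continuousOn
        exact continuous_id.mul ((continuous_const.sub ((continuous_pow 2).div_const 4)).sqrt)
      have hφ0 : φ 0 = 0 := by simp [hφ]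
      have hφ2 : φ (Real.sqrt 2) = 1 := by
        rw [hφ]
        simp only
        rw [Real.sq_sqrt (by norm_num : (0:ℝ) ≤ 2)]
        rw [show (1 : ℝ) - 2/4 = 1/2 by norm_num, ← Real.sqrt_mul (by norm_num : (0:ℝ) ≤ 2)]
        norm_num
      have hmem : ‖y‖ ∈ Ico (φ 0) (φ (Real.sqrt 2)) := by
        rw [hφ0, hφ2]; exact ⟨norm_nonneg y, hy⟩
      obtain ⟨t, ht, hφt⟩ := intermediate_value_Ico (Real.sqrt_nonneg 2) hcont hmem
      have ht0 : 0 ≤ t := ht.1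
      have hyn : (0:ℝ) < ‖y‖ := norm_pos_iff.2 h0
      refine ⟨(t / ‖y‖) • y, ?_, ?_⟩
      · rw [Metric.mem_ball, dist_zero_right, norm_smul, Real.norm_eq_abs,
          abs_of_nonneg (by positivity), div_mul_cancel₀ _ (ne_of_gt hyn)]
        exact ht.2
      · have hnx : ‖(t / ‖y‖) • y‖ = t := by
          rw [norm_smul, Real.norm_eq_abs, abs_of_nonneg (by positivity),
            div_mul_cancel₀ _ (ne_of_gt hyn)]
        simp only [hnx, smul_smul]
        rw [show Real.sqrt (1 - t^2/4) * (t / ‖y‖) = φ t / ‖y‖ by rw [hφ]; ring,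
          hφt, div_self (ne_of_gt hyn), one_smul]

/-- The metrical distortion of the 2-sphere in projection
coordinates, `Θ(x) = √(1 - ‖x‖²/4) • x` on `B(0,√2)`, pushes the Lebesgue
measure forward to the Riemannian area measure of `S²` in projection
coordinates, i.e. the measure with density `1/√(1-‖y‖²)` on the unit disk. -/
theorem metrical_distortion_pushforward
    (Θ : EuclideanSpace ℝ (Fin 2) → EuclideanSpace ℝ (Fin 2))
    (hΘ : ∀ x, Θ x = Real.sqrt (1 - ‖x‖^2/4) • x) :
    Measure.map Θ (volume.restrict (Metric.ball (0 : EuclideanSpace ℝ (Fin 2)) (Real.sqrt 2)))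
      = (volume.restrict (Metric.ball (0 : EuclideanSpace ℝ (Fin 2)) 1)).withDensity
          (fun y => ENNReal.ofReal (1 / Real.sqrt (1 - ‖y‖^2))) := by
  have hΘfun : Θ = fun x => Real.sqrt (1 - ‖x‖^2/4) • x := funext hΘ
  subst hΘfun
  set Θ : EuclideanSpace ℝ (Fin 2) → EuclideanSpace ℝ (Fin 2) :=
    fun x => Real.sqrt (1 - ‖x‖^2/4) • x with hΘdef
  set S : Set (EuclideanSpace ℝ (Fin 2)) := Metric.ball 0 (Real.sqrt 2) with hSdef
  set D : EuclideanSpace ℝ (Fin 2) → ℝ≥0∞ :=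
    fun y => ENNReal.ofReal (1 / Real.sqrt (1 - ‖y‖^2)) with hDdef
  have hS : MeasurableSet S := measurableSet_ball
  have hmeasΘ : Measurable Θ := by
    apply Continuous.measurable
    exact ((continuous_const.sub ((continuous_norm.pow 2).div_const 4)).sqrt).smul continuous_id
  have hf' : ∀ x ∈ S, HasFDerivWithinAt Θ (distD x) S x := fun x hx =>
    (distD_hasFDerivAt x (by linarith [memball_sq x hx])).hasFDerivWithinAt
  ext A hA
  rw [Measure.map_apply hmeasΘ hA, Measure.restrict_apply (hmeasΘ hA)]
  rw [withDensity_apply _ hA, Measure.restrict_restrict hA]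
  have key := lintegral_image_eq_lintegral_abs_det_fderiv_mul volume hS hf' theta_injOn
    (A.indicator D)
  rw [show Θ '' S = Metric.ball 0 1 from theta_image] at key
  have hind : ∫⁻ y in Metric.ball (0 : EuclideanSpace ℝ (Fin 2)) 1, A.indicator D y
      = ∫⁻ y in A ∩ Metric.ball (0 : EuclideanSpace ℝ (Fin 2)) 1, D y := by
    rw [lintegral_indicator hA, Measure.restrict_restrict hA]
  have hpt : ∀ x ∈ S, ENNReal.ofReal |(distD x).det| * A.indicator D (Θ x)
      = (Θ ⁻¹' A).indicator (fun _ => (1 : ℝ≥0∞)) x := by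
    intro x hx
    have hx2 := memball_sq x hx
    have hdetpos : (0:ℝ) < 1 - ‖x‖^2/2 := by linarith
    have hdet : |(distD x).det| = 1 - ‖x‖^2/2 := by
      rw [distD_det x (by linarith), abs_of_pos hdetpos]
    have hΘn : ‖Θ x‖^2 = ‖x‖^2 * (1 - ‖x‖^2/4) := theta_norm_sq x (by linarith)
    have hsq : 1 - ‖Θ x‖^2 = (1 - ‖x‖^2/2)^2 := by rw [hΘn]; ring
    have hDval : D (Θ x) = ENNReal.ofReal (1 / (1 - ‖x‖^2/2)) := by
      rw [hDdef]
      simp only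
      rw [hsq, Real.sqrt_sq (le_of_lt hdetpos)]
    by_cases hmem : Θ x ∈ A
    · rw [Set.indicator_of_mem hmem, Set.indicator_of_mem (show x ∈ Θ ⁻¹' A from hmem),
        hdet, hDval, ← ENNReal.ofReal_mul (by linarith),
        mul_one_div, div_self (ne_of_gt hdetpos), ENNReal.ofReal_one]
    · rw [Set.indicator_of_notMem hmem, Set.indicator_of_notMem
        (show x ∉ Θ ⁻¹' A from hmem), mul_zero]
  rw [← hind, key, setLIntegral_congr_fun hS hpt,
    lintegral_indicator (hmeasΘ hA), setLIntegral_one, Measure.restrict_apply (hmeasΘ hA)]
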